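/- (Characterization of the image of the Spencer differential: im ∂ = ker φ.) For an alternating bilinear map T : V × V → V, the following are equivalent: (i) there exists a linear map κ : V → End(V) with κ(v) ∈ 𝔤 for all v ∈ V and ∂κ = T, i.e. κ(v)v' − κ(v')v = T(v, v') for all v, v' ∈ V; (ii) η(T(v, w), v') + η(T(v', w), v) = 0 for all v, v' ∈ V and all w ∈ W. -/

import Mathlib

open Module LinearMap

lemma koszul {M : Type*} [AddCommGroup M] [Module ℝ M] [FiniteDimensional ℝ M]
    (b : M →ₗ[ℝ] M →ₗ[ℝ] ℝ)
    (hb : ∀ x : M, (∀ y : M, b x y = 0) → x = 0)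
    (R : M →ₗ[ℝ] M →ₗ[ℝ] M) (hR : ∀ x y : M, R x y + R y x = 0) :
    ∃ D : M →ₗ[ℝ] M →ₗ[ℝ] M,
      (∀ x y z : M, b (D x y) z + b (D x z) y = 0) ∧
      (∀ x y : M, D x y - D y x = R x y) := by
  have hinj : Function.Injective b := by
    rw [injective_iff_map_eq_zero]
    intro x hx
    exact hb x (fun y => by rw [hx]; rfl)
  have hsurj : Function.Surjective b := by
    rw [← LinearMap.range_eq_top]
    apply Submodule.eq_top_of_finrank_eq
    rw [LinearMap.finrank_range_of_inj hinj, Subspace.dual_finrank_eq]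
  let e : M ≃ₗ[ℝ] Dual ℝ M := LinearEquiv.ofBijective b ⟨hinj, hsurj⟩
  obtain ⟨φ, hφ⟩ : ∃ φ : M → M → Dual ℝ M, ∀ x y z : M,
      φ x y z = 2⁻¹ * (b (R x y) z - b (R y z) x + b (R z x) y) := by
    refine ⟨fun x y =>
      (2⁻¹ : ℝ) • (b (R x y) - (b.flip x).comp (R y) + (b.flip y).comp (R.flip x)),
      fun x y z => ?_⟩
    simp
    ring
  have hadd1 : ∀ x x' y : M, φ (x + x') y = φ x y + φ x' y := by
    intro x x' y
    apply LinearMap.ext; intro z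
    rw [LinearMap.add_apply, hφ, hφ, hφ]
    simp only [map_add, LinearMap.add_apply]
    ring
  have hsmul1 : ∀ (c : ℝ) (x y : M), φ (c • x) y = c • φ x y := by
    intro c x y
    apply LinearMap.ext; intro z
    rw [LinearMap.smul_apply, hφ, hφ, smul_eq_mul]
    simp only [map_smul, LinearMap.smul_apply, smul_eq_mul]
    ring
  have hadd2 : ∀ x y y' : M, φ x (y + y') = φ x y + φ x y' := by
    intro x y y'
    apply LinearMap.ext; intro z
    rw [LinearMap.add_apply, hφ, hφ, hφ]
    simp only [map_add, LinearMap.add_apply]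
    ring
  have hsmul2 : ∀ (c : ℝ) (x y : M), φ x (c • y) = c • φ x y := by
    intro c x y
    apply LinearMap.ext; intro z
    rw [LinearMap.smul_apply, hφ, hφ, smul_eq_mul]
    simp only [map_smul, LinearMap.smul_apply, smul_eq_mul]
    ring
  let D : M →ₗ[ℝ] M →ₗ[ℝ] M := LinearMap.mk₂ ℝ (fun x y => e.symm (φ x y))
    (by intro x x' y; rw [hadd1, map_add])
    (by intro c x y; rw [hsmul1, map_smul])
    (by intro x y y'; rw [hadd2, map_add])
    (by intro c x y; rw [hsmul2, map_smul])
  have hbD : ∀ x y z : M, b (D x y) z = φ x y z := by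
    intro x y z
    have h1 : b (D x y) = φ x y := by
      show b (e.symm (φ x y)) = φ x y
      exact e.apply_symm_apply (φ x y)
    rw [h1]
  have hanti : ∀ (x y : M) (z : M), b (R x y) z + b (R y x) z = 0 := by
    intro x y z
    rw [← LinearMap.add_apply, ← map_add, hR, map_zero, LinearMap.zero_apply]
  refine ⟨D, ?_, ?_⟩
  · intro x y z
    rw [hbD, hbD, hφ, hφ]
    have h1 := hanti x y z
    have h2 := hanti y z x
    have h3 := hanti z x y
    linarith
  · intro x y
    have h0 : D x y - D y x - R x y = 0 := by
      apply hb
      intro z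
      rw [map_sub, map_sub, LinearMap.sub_apply, LinearMap.sub_apply,
        hbD, hbD, hφ, hφ]
      have h1 := hanti y z x
      have h2 := hanti z x y
      have h3 := hanti x y z
      linarith
    exact sub_eq_zero.mp h0

/-- Membership in the Lie algebra `𝔤`. -/
def InG {V : Type*} [AddCommGroup V] [Module ℝ V]
    (η : V →ₗ[ℝ] V →ₗ[ℝ] ℝ)
    (h : Module.Dual ℝ V →ₗ[ℝ] Module.Dual ℝ V →ₗ[ℝ] ℝ)
    (X : V →ₗ[ℝ] V) : Prop :=
  (∀ v v' : V, η (X v) v' + η v (X v') = 0) ∧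
  (∀ α α' : Module.Dual ℝ V, h (α ∘ₗ X) α' + h α (α' ∘ₗ X) = 0)

set_option maxHeartbeats 1000000 in
/-- Characterisation of the image of the Spencer differential:
an alternating bilinear `T` is of the form `∂κ` for a `𝔤`-valued `κ` if and only if
`η(T(v, w), v') + η(T(v', w), v) = 0` for all `v, v' ∈ V`, `w ∈ W`. -/
theorem spencer_image_characterisation
    {V : Type*} [AddCommGroup V] [Module ℝ V] [FiniteDimensional ℝ V]
    (W : Submodule ℝ V)
    (η : V →ₗ[ℝ] V →ₗ[ℝ] ℝ)
    (hη_symm : ∀ v v' : V, η v v' = η v' v)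
    (hη_rad : ∀ v : V, (∀ v' : V, η v v' = 0) ↔ v ∈ W)
    (h : Module.Dual ℝ V →ₗ[ℝ] Module.Dual ℝ V →ₗ[ℝ] ℝ)
    (hh_symm : ∀ α α' : Module.Dual ℝ V, h α α' = h α' α)
    (hh_rad : ∀ α : Module.Dual ℝ V,
      (∀ α' : Module.Dual ℝ V, h α α' = 0) ↔ α ∈ W.dualAnnihilator)
    (T : V →ₗ[ℝ] V →ₗ[ℝ] V)
    (hTalt : ∀ v : V, T v v = 0) :
    (∃ κ : V →ₗ[ℝ] V →ₗ[ℝ] V, (∀ v : V, InG η h (κ v)) ∧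
        ∀ v v' : V, κ v v' - κ v' v = T v v') ↔
    (∀ v v' : V, ∀ w : V, w ∈ W → η (T v w) v' + η (T v' w) v = 0) := by
  have hη0 : ∀ x : V, x ∈ W → ∀ y : V, η x y = 0 := fun x hx => (hη_rad x).mpr hx
  have hη0r : ∀ (y x : V), x ∈ W → η y x = 0 := fun y x hx => by
    rw [hη_symm]; exact hη0 x hx y
  have hT : ∀ x y : V, T x y = - T y x := by
    intro x y
    have h0 := hTalt (x + y)
    simp only [map_add, LinearMap.add_apply, hTalt, zero_add, add_zero] at h0
    exact eq_neg_of_add_eq_zero_right h0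
  constructor
  · rintro ⟨κ, hκg, hκT⟩ v v' w hw
    have e1 : η (T v w) v' = - η (κ w v) v' := by
      rw [← hκT v w, map_sub, LinearMap.sub_apply]
      have h2 : η (κ v w) v' = 0 := by
        have h3 := (hκg v).1 w v'
        rw [hη0 w hw (κ v v')] at h3
        linarith
      linarith
    have e2 : η (T v' w) v = - η (κ w v') v := by
      rw [← hκT v' w, map_sub, LinearMap.sub_apply]
      have h2 : η (κ v' w) v = 0 := by
        have h3 := (hκg v').1 w v
        rw [hη0 w hw (κ v' v)] at h3
        linarith
      linarith
    have h4 := (hκg w).1 v v'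
    rw [hη_symm v (κ w v')] at h4
    rw [e1, e2]
    linarith
  · intro hii
    obtain ⟨U, hU⟩ := W.exists_isCompl
    set pw : V →ₗ[ℝ] ↥W := W.linearProjOfIsCompl U hU with hpw_def
    set pu : V →ₗ[ℝ] ↥U := U.linearProjOfIsCompl W hU.symm with hpu_def
    set p : V →ₗ[ℝ] V := W.subtype ∘ₗ pw with hp_def
    set q : V →ₗ[ℝ] V := U.subtype ∘ₗ pu with hq_def
    have hpq : ∀ x : V, p x + q x = x := fun x =>
      Submodule.projection_add_projection_eq_self hU x
    have hpW : ∀ x : V, p x ∈ W := fun x => (pw x).2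
    have hqU : ∀ x : V, q x ∈ U := fun x => (pu x).2
    have hpw_coe : ∀ w : ↥W, pw ↑w = w := fun w =>
      Submodule.linearProjOfIsCompl_apply_left hU w
    have hp_of_mem : ∀ x ∈ W, p x = x := by
      intro x hx
      show ↑(pw x) = x
      rw [show x = ((⟨x, hx⟩ : ↥W) : V) from rfl, hpw_coe]
    have hq_of_mem : ∀ x ∈ W, q x = 0 := by
      intro x hx
      have := hpq x
      rw [hp_of_mem x hx] at this
      exact add_eq_left.mp this
    have hpu_of_mem : ∀ x ∈ W, pu x = 0 := fun x hx =>
      Submodule.linearProjOfIsCompl_apply_right' hU.symm hx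
    have hηq_l : ∀ x y : V, η (q x) y = η x y := by
      intro x y
      conv_rhs => rw [← hpq x]
      rw [map_add, LinearMap.add_apply, hη0 (p x) (hpW x) y, zero_add]
    have hηq_r : ∀ x y : V, η x (q y) = η x y := by
      intro x y
      rw [hη_symm, hηq_l, hη_symm]
    have hTWW : ∀ x ∈ W, ∀ y ∈ W, T x y ∈ W := by
      intro x hx y hy
      apply (hη_rad _).mp
      intro v'
      have h1 := hii x v' y hy
      rw [hη0r (T v' y) x hx] at h1
      linarith
    -- the Koszul construction on U
    set bU : ↥U →ₗ[ℝ] ↥U →ₗ[ℝ] ℝ := η.compl₁₂ U.subtype U.subtype with hbU_def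
    have hbU_app : ∀ x y : ↥U, bU x y = η ↑x ↑y := fun x y => rfl
    have hbU : ∀ x : ↥U, (∀ y : ↥U, bU x y = 0) → x = 0 := by
      intro x hx
      have hxW : (↑x : V) ∈ W := by
        apply (hη_rad _).mp
        intro v'
        rw [← hηq_r]
        exact hx (pu v')
      have : (↑x : V) = 0 := Submodule.disjoint_def.mp hU.disjoint ↑x hxW x.2
      exact Subtype.ext this
    set RU : ↥U →ₗ[ℝ] ↥U →ₗ[ℝ] ↥U := (T.compl₁₂ U.subtype U.subtype).compr₂ pu
      with hRU_def
    have hRU_app : ∀ x y : ↥U, RU x y = pu (T ↑x ↑y) := fun x y => rfl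
    have hRU : ∀ x y : ↥U, RU x y + RU y x = 0 := by
      intro x y
      rw [hRU_app, hRU_app, hT (↑y) (↑x), map_neg, add_neg_cancel]
    obtain ⟨DU, hDUskew, hDUdiff⟩ := koszul bU hbU RU hRU
    -- the map H and the inverse metric g on W
    set H : Dual ℝ V →ₗ[ℝ] V := (evalEquiv ℝ V).symm.toLinearMap ∘ₗ h with hH_def
    have hH : ∀ α α' : Dual ℝ V, α' (H α) = h α α' := by
      intro α α'
      show α' ((evalEquiv ℝ V).symm (h α)) = h α α'
      rw [Module.apply_evalEquiv_symm_apply]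
    have hHW : ∀ α : Dual ℝ V, H α ∈ W := by
      intro α
      have hmem : H α ∈ (W.dualAnnihilator).dualCoannihilator := by
        rw [Submodule.mem_dualCoannihilator]
        intro φ hφ
        rw [hH, hh_symm]
        exact (hh_rad φ).mpr hφ α
      rwa [Subspace.dualAnnihilator_dualCoannihilator_eq] at hmem
    set H' : Dual ℝ V →ₗ[ℝ] ↥W := H.codRestrict W hHW with hH'_def
    have hH'coe : ∀ α : Dual ℝ V, (↑(H' α) : V) = H α := fun α => rfl
    have hkerH' : ∀ α : Dual ℝ V, H' α = 0 ↔ α ∈ W.dualAnnihilator := by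
      intro α
      constructor
      · intro hα
        apply (hh_rad α).mp
        intro α'
        rw [← hH]
        rw [← hH'coe, hα]
        simp
      · intro hα
        apply Subtype.ext
        rw [hH'coe]
        show H α = (0 : V)
        apply (Module.forall_dual_apply_eq_zero_iff ℝ (H α)).mp
        intro φ
        rw [hH]
        exact (hh_rad α).mpr hα φ
    have hH'surj : Function.Surjective H' := by
      rw [← LinearMap.range_eq_top]
      apply Submodule.eq_top_of_finrank_eq
      have hker : LinearMap.ker H' = W.dualAnnihilator := by
        ext α
        rw [LinearMap.mem_ker, hkerH']
      have h1 := LinearMap.finrank_range_add_finrank_ker H'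
      rw [hker] at h1
      have h2 : finrank ℝ (Dual ℝ V) = finrank ℝ V := Subspace.dual_finrank_eq
      have h3 : finrank ℝ W.dualAnnihilator = finrank ℝ (V ⧸ W) :=
        (LinearEquiv.finrank_eq (Subspace.quotEquivAnnihilator W)).symm
      have h4 : finrank ℝ (V ⧸ W) + finrank ℝ ↥W = finrank ℝ V :=
        Submodule.finrank_quotient_add_finrank W
      omega
    obtain ⟨s, hs⟩ := H'.exists_rightInverse_of_surjective
      (LinearMap.range_eq_top.mpr hH'surj)
    have hs' : ∀ w : ↥W, H' (s w) = w := by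
      intro w
      rw [← LinearMap.comp_apply, hs, LinearMap.id_apply]
    set g : ↥W →ₗ[ℝ] ↥W →ₗ[ℝ] ℝ := h.compl₁₂ s s with hg_def
    have hg_app : ∀ w z : ↥W, g w z = h (s w) (s z) := fun w z => rfl
    have hHs : ∀ w : ↥W, H (s w) = ↑w := by
      intro w
      rw [← hH'coe, hs']
    have hgF1 : ∀ w z : ↥W, g w z = (s z) ↑w := by
      intro w z
      rw [hg_app, ← hH, hHs]
    have hg_symm : ∀ w z : ↥W, g w z = g z w := by
      intro w z
      rw [hg_app, hg_app, hh_symm]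
    have hker_s : ∀ (α : Dual ℝ V) (y : ↥W), (s (H' α)) ↑y = α ↑y := by
      intro α y
      have hmem : s (H' α) - α ∈ W.dualAnnihilator := by
        apply (hkerH' _).mp
        rw [map_sub, hs', sub_self]
      have h0 := (Submodule.mem_dualAnnihilator _).mp hmem ↑y y.2
      rw [LinearMap.sub_apply] at h0
      linarith
    have hgF3 : ∀ (α : Dual ℝ V) (y : ↥W), α ↑y = g (H' α) y := by
      intro α y
      rw [hg_symm, hgF1, hker_s]
    have hgnd : ∀ x : ↥W, (∀ z : ↥W, g x z = 0) → x = 0 := by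
      intro x hx
      have hall : ∀ φ : Dual ℝ V, φ ↑x = 0 := by
        intro φ
        rw [hgF3 φ x, hg_symm, hx]
      exact Subtype.ext ((Module.forall_dual_apply_eq_zero_iff ℝ (↑x : V)).mp hall)
    set RW : ↥W →ₗ[ℝ] ↥W →ₗ[ℝ] ↥W := (T.compl₁₂ W.subtype W.subtype).compr₂ pw
      with hRW_def
    have hRW_app : ∀ x y : ↥W, RW x y = pw (T ↑x ↑y) := fun x y => rfl
    have hRW : ∀ x y : ↥W, RW x y + RW y x = 0 := by
      intro x y
      rw [hRW_app, hRW_app, hT (↑y) (↑x), map_neg, add_neg_cancel]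
    obtain ⟨AW, hAWskew, hAWdiff⟩ := koszul g hgnd RW hRW
    obtain ⟨κ, hκapp⟩ : ∃ κ : V →ₗ[ℝ] V →ₗ[ℝ] V, ∀ v v' : V,
        κ v v' = (↑(AW (pw v) (pw v')) : V) + p (T (p v) (q v'))
          + (2⁻¹ : ℝ) • p (T (q v) (q v')) + (↑(DU (pu v) (pu v')) : V)
          + q (T (p v) (q v')) := by
      refine ⟨LinearMap.mk₂ ℝ
        (fun v v' => (↑(AW (pw v) (pw v')) : V) + p (T (p v) (q v'))
          + (2⁻¹ : ℝ) • p (T (q v) (q v')) + (↑(DU (pu v) (pu v')) : V)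
          + q (T (p v) (q v')))
        (by
          intro x x' y
          simp only [map_add, LinearMap.add_apply, Submodule.coe_add, smul_add]
          module)
        (by
          intro c x y
          simp only [map_smul, LinearMap.smul_apply, Submodule.coe_smul]
          module)
        (by
          intro x y y'
          simp only [map_add, LinearMap.add_apply, Submodule.coe_add, smul_add]
          module)
        (by
          intro c x y
          simp only [map_smul, LinearMap.smul_apply, Submodule.coe_smul]
          module), fun v v' => rfl⟩
    refine ⟨κ, ?_, ?_⟩
    · intro v
      constructor
      · -- η-skewness
        intro a a'
        have expand : ∀ x y : V,
            η (κ v x) y = η (↑(DU (pu v) (pu x)) : V) y + η (T (p v) (q x)) y := by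
          intro x y
          rw [hκapp]
          rw [map_add, map_add, map_add, map_add, LinearMap.add_apply,
            LinearMap.add_apply, LinearMap.add_apply, LinearMap.add_apply]
          rw [hη0 _ (AW (pw v) (pw x)).2 y, hη0 _ (hpW (T (p v) (q x))) y,
            hη0 _ (W.smul_mem _ (hpW (T (q v) (q x)))) y, hηq_l]
          ring
        rw [hη_symm a (κ v a'), expand a a', expand a' a]
        have e1 : η (↑(DU (pu v) (pu a)) : V) a' = bU (DU (pu v) (pu a)) (pu a') := by
          rw [hbU_app, ← hηq_r]
          rfl
        have e2 : η (↑(DU (pu v) (pu a')) : V) a = bU (DU (pu v) (pu a')) (pu a) := by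
          rw [hbU_app, ← hηq_r]
          rfl
        have e3 : η (T (p v) (q a)) a' = - η (T (q a) (p v)) (q a') := by
          rw [hT (p v) (q a), map_neg, LinearMap.neg_apply, hηq_r]
        have e4 : η (T (p v) (q a')) a = - η (T (q a') (p v)) (q a) := by
          rw [hT (p v) (q a'), map_neg, LinearMap.neg_apply, hηq_r]
        have hsk := hDUskew (pu v) (pu a) (pu a')
        have hti := hii (q a) (q a') (p v) (hpW v)
        rw [e1, e2, e3, e4]
        linarith
      · -- h-skewness
        intro α α'
        have hκW : ∀ β : Dual ℝ V, κ v (H β) = (↑(AW (pw v) (H' β)) : V) := by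
          intro β
          rw [hκapp]
          have h1 : pw (H β) = H' β := hpw_coe (H' β)
          have h2 : q (H β) = 0 := hq_of_mem _ (hHW β)
          have h3 : pu (H β) = 0 := hpu_of_mem _ (hHW β)
          rw [h1, h2, h3]
          simp
        have key : ∀ β γ : Dual ℝ V,
            h (β ∘ₗ κ v) γ = g (H' β) (AW (pw v) (H' γ)) := by
          intro β γ
          rw [hh_symm, ← hH]
          rw [LinearMap.comp_apply, hκW γ, hgF3]
        rw [key α α', hh_symm α (α' ∘ₗ κ v), key α' α]
        have hsk := hAWskew (pw v) (H' α') (H' α)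
        rw [hg_symm (H' α) (AW (pw v) (H' α')), hg_symm (H' α') (AW (pw v) (H' α))]
        linarith
    · -- the Spencer differential of κ is T
      intro v v'
      rw [hκapp, hκapp]
      have e1 : (↑(AW (pw v) (pw v')) : V) - ↑(AW (pw v') (pw v)) = T (p v) (p v') := by
        rw [← Submodule.coe_sub, hAWdiff, hRW_app]
        exact hp_of_mem _ (hTWW _ (hpW v) _ (hpW v'))
      have e4 : (↑(DU (pu v) (pu v')) : V) - ↑(DU (pu v') (pu v)) = q (T (q v) (q v')) := by
        rw [← Submodule.coe_sub, hDUdiff, hRU_app]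
        rfl
      have h2' : T (p v') (q v) = - T (q v) (p v') := hT _ _
      have h3' : T (q v') (q v) = - T (q v) (q v') := hT _ _
      have hTexp : T v v' = T (p v) (p v')
          + (p (T (p v) (q v')) + q (T (p v) (q v')))
          + (p (T (q v) (p v')) + q (T (q v) (p v')))
          + (p (T (q v) (q v')) + q (T (q v) (q v'))) := by
        conv_lhs => rw [← hpq v, ← hpq v']
        simp only [map_add, LinearMap.add_apply]
        rw [hpq (T (p v) (q v')), hpq (T (q v) (p v')), hpq (T (q v) (q v'))]
        abel
      rw [h2', h3', map_neg, map_neg, map_neg]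
      linear_combination (norm := module) e1 + e4 - hTexp
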